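/- For an odd prime p, the hyperfactorial H(p-1) = ∏_{k=1}^{p-1} k^k satisfies H(p-1) ≡ (-1)^((p-1)/2) · (p-1)!! (mod p). -/

import Mathlib

set_option linter.unnecessarySeqFocus false

def hyperfactorial (n : ℕ) : ℕ := ∏ k ∈ Finset.Icc 1 n, k ^ k

theorem stmt10 (p : ℕ) (hp : p.Prime) (hodd : Odd p) :
    (hyperfactorial (p - 1) : ZMod p) =
      (-1) ^ ((p - 1) / 2) * (Nat.doubleFactorial (p - 1) : ZMod p) := by
  haveI : Fact p.Prime := ⟨hp⟩
  obtain ⟨m, hm⟩ := hodd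
  have hp2 : p ≠ 2 := by rintro rfl; omega
  have hp3 : 3 ≤ p := by have := hp.two_le; omega
  have hm1 : 1 ≤ m := by omega
  have hp1 : p - 1 = 2 * m := by omega
  have hdiv : (p - 1) / 2 = m := by omega
  -- per-pair identity
  have key : ∀ k ∈ Finset.Icc 1 m,
      ((k : ZMod p)) ^ k * (((p - k : ℕ) : ZMod p)) ^ (p - k)
        = (-1) ^ (k + 1) * (k : ZMod p) := by
    intro k hk
    simp only [Finset.mem_Icc] at hk
    have hkp : k ≤ p := by omega
    have hcast : ((p - k : ℕ) : ZMod p) = -(k : ZMod p) := by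
      rw [Nat.cast_sub hkp, ZMod.natCast_self]; ring
    rw [hcast, neg_pow, ← mul_assoc, mul_comm ((k:ZMod p)^k), mul_assoc,
      ← pow_add]
    have hsum : k + (p - k) = p := by omega
    rw [hsum, ZMod.pow_card]
    congr 1
    rcases Nat.even_or_odd k with he | ho
    · have h1 : Odd (p - k) := by
        rw [Nat.even_iff] at he; rw [Nat.odd_iff]; omega
      have h2 : Odd (k + 1) := by
        rw [Nat.even_iff] at he; rw [Nat.odd_iff]; omega
      rw [h1.neg_one_pow, h2.neg_one_pow]
    · have h1 : Even (p - k) := by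
        rw [Nat.odd_iff] at ho; rw [Nat.even_iff]; omega
      have h2 : Even (k + 1) := by
        rw [Nat.odd_iff] at ho; rw [Nat.even_iff]; omega
      rw [h1.neg_one_pow, h2.neg_one_pow]
  -- step 1 : hyperfactorial as product over half range
  have step1 : (hyperfactorial (p - 1) : ZMod p)
      = ∏ k ∈ Finset.Icc 1 m, ((-1) ^ (k + 1) * (k : ZMod p)) := by
    rw [hyperfactorial]
    push_cast
    have hsplit : Finset.Icc 1 (p - 1)
        = Finset.Icc 1 m ∪ Finset.Icc (m + 1) (p - 1) := by
      ext x; simp only [Finset.mem_Icc, Finset.mem_union]; omega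
    have hdisj : Disjoint (Finset.Icc 1 m) (Finset.Icc (m + 1) (p - 1)) := by
      simp only [Finset.disjoint_left, Finset.mem_Icc]; omega
    rw [hsplit, Finset.prod_union hdisj]
    have h2 : ∏ k ∈ Finset.Icc (m + 1) (p - 1), (k : ZMod p) ^ k
        = ∏ k ∈ Finset.Icc 1 m, (((p - k : ℕ) : ZMod p)) ^ (p - k) := by
      refine Finset.prod_nbij' (fun k => p - k) (fun k => p - k) ?_ ?_ ?_ ?_ ?_
      · intro a ha; simp only [Finset.mem_Icc] at *; omega
      · intro a ha; simp only [Finset.mem_Icc] at *; omega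
      · intro a ha; simp only [Finset.mem_Icc] at ha; beta_reduce; omega
      · intro a ha; simp only [Finset.mem_Icc] at ha; beta_reduce; omega
      · intro a ha
        simp only [Finset.mem_Icc] at ha
        beta_reduce
        have : p - (p - a) = a := by omega
        rw [this]
    rw [h2, ← Finset.prod_mul_distrib]
    exact Finset.prod_congr rfl key
  -- step 2 : reindex to odd residues
  have step2 : ∏ k ∈ Finset.Icc 1 m, ((-1) ^ (k + 1) * (k : ZMod p))
      = ∏ k ∈ Finset.Icc 1 m, (((p - 2 * k : ℕ) : ZMod p)) := by
    refine Finset.prod_nbij'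
      (fun k => if k % 2 = 1 then m - (k - 1) / 2 else k / 2)
      (fun l => if 2 * l ≤ m then 2 * l else p - 2 * l) ?_ ?_ ?_ ?_ ?_
    · intro a ha; simp only [Finset.mem_Icc] at *; split_ifs <;> omega
    · intro a ha; simp only [Finset.mem_Icc] at *; split_ifs <;> omega
    · intro a ha; simp only [Finset.mem_Icc] at ha; beta_reduce; split_ifs <;> omega
    · intro a ha; simp only [Finset.mem_Icc] at ha; beta_reduce; split_ifs <;> omega
    · intro k hk
      simp only [Finset.mem_Icc] at hk
      beta_reduce
      rcases Nat.even_or_odd k with he | ho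
      · have hk2 : k % 2 = 0 := Nat.even_iff.mp he
        have : (if k % 2 = 1 then m - (k - 1) / 2 else k / 2) = k / 2 := by
          split_ifs <;> omega
        rw [this]
        have h1 : p - 2 * (k / 2) = p - k := by omega
        rw [h1]
        have h2 : Odd (k + 1) := by rw [Nat.odd_iff]; omega
        rw [h2.neg_one_pow, Nat.cast_sub (by omega : k ≤ p), ZMod.natCast_self]
        ring
      · have hk2 : k % 2 = 1 := Nat.odd_iff.mp ho
        have : (if k % 2 = 1 then m - (k - 1) / 2 else k / 2)
            = m - (k - 1) / 2 := by split_ifs <;> omega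
        rw [this]
        have h1 : p - 2 * (m - (k - 1) / 2) = k := by omega
        rw [h1]
        have h2 : Even (k + 1) := by rw [Nat.even_iff]; omega
        rw [h2.neg_one_pow, one_mul]
  -- step 3 : evaluate the odd product
  have step3 : ∏ k ∈ Finset.Icc 1 m, (((p - 2 * k : ℕ) : ZMod p))
      = (-1) ^ m * (Nat.doubleFactorial (p - 1) : ZMod p) := by
    have h1 : ∀ k ∈ Finset.Icc 1 m,
        (((p - 2 * k : ℕ) : ZMod p)) = (-1) * (2 * (k : ZMod p)) := by
      intro k hk
      simp only [Finset.mem_Icc] at hk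
      rw [Nat.cast_sub (by omega : 2 * k ≤ p), ZMod.natCast_self]
      push_cast; ring
    rw [Finset.prod_congr rfl h1, Finset.prod_mul_distrib,
      Finset.prod_const, Finset.prod_mul_distrib, Finset.prod_const]
    have hcard : (Finset.Icc 1 m).card = m := by
      rw [Nat.card_Icc]; omega
    have hfact : ∏ k ∈ Finset.Icc 1 m, (k : ZMod p) = (Nat.factorial m : ZMod p) := by
      rw [← Nat.cast_prod]
      congr 1
      rw [← Finset.Ico_add_one_right_eq_Icc, Finset.prod_Ico_id_eq_factorial]
    rw [hcard, hfact, hp1, Nat.doubleFactorial_two_mul]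
    push_cast
    ring
  rw [step1, step2, step3, hdiv]
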